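/- Let b, c ∈ ℝ and define on ℝ⁴ ≅ ℂ²: d_M(x₁,x₂,y₁,y₂) = [(x₁ − c y₁ + b y₂)² + (x₂ − c y₂ − b y₁)²]/(1+b²+c²) and d_N = y₁² + y₂². Then |Re(∑_{j=1,2} (∂d_M/∂z_j)(∂d_N/∂z̄_j))| ≤ ((|b| + |c|)/√(1+b²+c²))·(d_M d_N)^{1/2}. -/

import Mathlib

open Complex

/-- Partial derivative in the direction `x_j`, identifying `ℂⁿ ≅ ℝⁿ × ℝⁿ`
via `z_j = x_j + i y_j`. -/
noncomputable def pderivX {n : ℕ} (j : Fin n)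
    (f : (Fin n → ℝ) × (Fin n → ℝ) → ℝ) : (Fin n → ℝ) × (Fin n → ℝ) → ℝ :=
  fun p => deriv (fun t => f (Function.update p.1 j t, p.2)) (p.1 j)

/-- Partial derivative in the direction `y_j`. -/
noncomputable def pderivY {n : ℕ} (j : Fin n)
    (f : (Fin n → ℝ) × (Fin n → ℝ) → ℝ) : (Fin n → ℝ) × (Fin n → ℝ) → ℝ :=
  fun p => deriv (fun t => f (p.1, Function.update p.2 j t)) (p.2 j)

/-- The holomorphic derivative `∂f/∂z_j = (1/2)(∂f/∂x_j − i ∂f/∂y_j)`. -/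
noncomputable def dz {n : ℕ} (j : Fin n)
    (f : (Fin n → ℝ) × (Fin n → ℝ) → ℝ) (p : (Fin n → ℝ) × (Fin n → ℝ)) : ℂ :=
  (1/2 : ℂ) * ((pderivX j f p : ℂ) - Complex.I * (pderivY j f p : ℂ))

/-- The antiholomorphic derivative `∂f/∂z̄_j = (1/2)(∂f/∂x_j + i ∂f/∂y_j)`. -/
noncomputable def dzbar {n : ℕ} (j : Fin n)
    (f : (Fin n → ℝ) × (Fin n → ℝ) → ℝ) (p : (Fin n → ℝ) × (Fin n → ℝ)) : ℂ :=
  (1/2 : ℂ) * ((pderivX j f p : ℂ) + Complex.I * (pderivY j f p : ℂ))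

lemma cs_aux (u v y1 y2 : ℝ) :
    |u*y2 - v*y1| ≤ Real.sqrt (u^2+v^2) * Real.sqrt (y1^2+y2^2) := by
  rw [← Real.sqrt_sq_eq_abs, ← Real.sqrt_mul (by positivity)]
  apply Real.sqrt_le_sqrt
  nlinarith [sq_nonneg (u*y1 + v*y2)]

lemma cs_aux2 (u v y1 y2 : ℝ) :
    |u*y1 + v*y2| ≤ Real.sqrt (u^2+v^2) * Real.sqrt (y1^2+y2^2) := by
  rw [← Real.sqrt_sq_eq_abs, ← Real.sqrt_mul (by positivity)]
  apply Real.sqrt_le_sqrt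
  nlinarith [sq_nonneg (u*y2 - v*y1)]

theorem re_sum_dz_dzbar_estimate (b c : ℝ) :
    let dM : (Fin 2 → ℝ) × (Fin 2 → ℝ) → ℝ :=
      fun p => ((p.1 0 - c * p.2 0 + b * p.2 1) ^ 2
        + (p.1 1 - c * p.2 1 - b * p.2 0) ^ 2) / (1 + b ^ 2 + c ^ 2)
    let dN : (Fin 2 → ℝ) × (Fin 2 → ℝ) → ℝ := fun p => (p.2 0) ^ 2 + (p.2 1) ^ 2
    ∀ p : (Fin 2 → ℝ) × (Fin 2 → ℝ),
      |(∑ j : Fin 2, dz j dM p * dzbar j dN p).re| ≤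
        ((|b| + |c|) / Real.sqrt (1 + b ^ 2 + c ^ 2)) * Real.sqrt (dM p * dN p) := by
  intro dM dN p
  have hD : (0:ℝ) < 1 + b^2 + c^2 := by positivity
  set D : ℝ := 1 + b^2 + c^2 with hDdef
  set x1 := p.1 0; set x2 := p.1 1; set y1 := p.2 0; set y2 := p.2 1
  set u : ℝ := x1 - c*y1 + b*y2 with hu
  set v : ℝ := x2 - c*y2 - b*y1 with hv
  -- partial derivatives of dM
  have eX0 : pderivX 0 dM p = 2*u/D := by
    simp only [pderivX, dM]
    rw [show (fun t => ((Function.update p.1 0 t 0 - c * p.2 0 + b * p.2 1) ^ 2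
        + (Function.update p.1 0 t 1 - c * p.2 1 - b * p.2 0) ^ 2) / (1 + b ^ 2 + c ^ 2))
      = fun t => ((t - c*y1 + b*y2)^2 + v^2)/D by
        funext t
        simp [Function.update, hv, hDdef, x1, x2, y1, y2]]
    have h := (((((hasDerivAt_id' x1).sub_const (c*y1)).add_const (b*y2)).pow 2).add_const
      (v^2)).div_const D
    have := h.deriv
    simp only [Pi.add_apply, Pi.pow_apply] at this
    rw [this]; simp [hu]
  have eX1 : pderivX 1 dM p = 2*v/D := by
    simp only [pderivX, dM]
    rw [show (fun t => ((Function.update p.1 1 t 0 - c * p.2 0 + b * p.2 1) ^ 2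
        + (Function.update p.1 1 t 1 - c * p.2 1 - b * p.2 0) ^ 2) / (1 + b ^ 2 + c ^ 2))
      = fun t => (u^2 + ((t - c*y2) - b*y1)^2)/D by
        funext t
        simp [Function.update, hu, hDdef, x1, x2, y1, y2]]
    have h := (((((hasDerivAt_id' x2).sub_const (c*y2)).sub_const (b*y1)).pow 2).const_add
      (u^2)).div_const D
    have := h.deriv
    simp only [Pi.add_apply, Pi.pow_apply] at this
    rw [this]; simp [hv]
  have eY0 : pderivY 0 dM p = (-2*c*u - 2*b*v)/D := by
    simp only [pderivY, dM]
    rw [show (fun t => ((p.1 0 - c * Function.update p.2 0 t 0 + b * Function.update p.2 0 t 1) ^ 2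
        + (p.1 1 - c * Function.update p.2 0 t 1 - b * Function.update p.2 0 t 0) ^ 2)
          / (1 + b ^ 2 + c ^ 2))
      = fun t => (((x1 - c*t) + b*y2)^2 + ((x2 - c*y2) - b*t)^2)/D by
        funext t
        simp [Function.update, hDdef, x1, x2, y1, y2]]
    have h1 : HasDerivAt (fun t : ℝ => (x1 - c*t) + b*y2) (-c) y1 := by
      simpa using (((hasDerivAt_id' y1).const_mul c).const_sub x1).add_const (b*y2)
    have h2 : HasDerivAt (fun t : ℝ => (x2 - c*y2) - b*t) (-b) y1 := by
      simpa using ((hasDerivAt_id' y1).const_mul b).const_sub (x2 - c*y2)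
    have h := ((h1.pow 2).add (h2.pow 2)).div_const D
    have := h.deriv
    simp only [Pi.add_apply, Pi.pow_apply] at this
    rw [this]; simp [hu, hv]; ring
  have eY1 : pderivY 1 dM p = (2*b*u - 2*c*v)/D := by
    simp only [pderivY, dM]
    rw [show (fun t => ((p.1 0 - c * Function.update p.2 1 t 0 + b * Function.update p.2 1 t 1) ^ 2
        + (p.1 1 - c * Function.update p.2 1 t 1 - b * Function.update p.2 1 t 0) ^ 2)
          / (1 + b ^ 2 + c ^ 2))
      = fun t => (((x1 - c*y1) + b*t)^2 + ((x2 - c*t) - b*y1)^2)/D by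
        funext t
        simp [Function.update, hDdef, x1, x2, y1, y2]]
    have h1 : HasDerivAt (fun t : ℝ => (x1 - c*y1) + b*t) b y2 := by
      simpa using (((hasDerivAt_id' y2).const_mul b).const_add (x1 - c*y1))
    have h2 : HasDerivAt (fun t : ℝ => (x2 - c*t) - b*y1) (-c) y2 := by
      simpa using ((((hasDerivAt_id' y2).const_mul c).const_sub x2).sub_const (b*y1))
    have h := ((h1.pow 2).add (h2.pow 2)).div_const D
    have := h.deriv
    simp only [Pi.add_apply, Pi.pow_apply] at this
    rw [this]; simp [hu, hv]; ring
  -- partial derivatives of dN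
  have fX0 : pderivX 0 dN p = 0 := by
    simp only [pderivX, dN]; simp
  have fX1 : pderivX 1 dN p = 0 := by
    simp only [pderivX, dN]; simp
  have fY0 : pderivY 0 dN p = 2*y1 := by
    simp only [pderivY, dN]
    rw [show (fun t => (Function.update p.2 0 t 0)^2 + (Function.update p.2 0 t 1)^2)
      = fun t => t^2 + y2^2 by funext t; simp [Function.update, y1, y2]]
    have h := ((hasDerivAt_id' y1).pow 2).add_const (y2^2)
    have := h.deriv
    simp only [Pi.add_apply, Pi.pow_apply] at this
    rw [this]; ring
  have fY1 : pderivY 1 dN p = 2*y2 := by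
    simp only [pderivY, dN]
    rw [show (fun t => (Function.update p.2 1 t 0)^2 + (Function.update p.2 1 t 1)^2)
      = fun t => y1^2 + t^2 by funext t; simp [Function.update, y1, y2]]
    have h := (((hasDerivAt_id' y2).pow 2)).const_add (y1^2)
    have := h.deriv
    simp only [Pi.add_apply, Pi.pow_apply] at this
    rw [this]; ring
  have hre : (∑ j : Fin 2, dz j dM p * dzbar j dN p).re
      = (b*(u*y2 - v*y1) - c*(u*y1 + v*y2))/D := by
    rw [Fin.sum_univ_two]
    simp only [dz, dzbar, eX0, eX1, eY0, eY1, fX0, fX1, fY0, fY1]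
    simp [Complex.ext_iff]
    ring
  rw [hre]
  have hsD : Real.sqrt D > 0 := Real.sqrt_pos.mpr hD
  have hdm : dM p = (u^2 + v^2)/D := by simp [dM, hu, hv, hDdef, x1, x2, y1, y2]
  have hdn : dN p = y1^2 + y2^2 := by simp [dN, y1, y2]
  rw [hdm, hdn]
  have hrhs : Real.sqrt ((u^2+v^2)/D * (y1^2+y2^2))
      = Real.sqrt (u^2+v^2) * Real.sqrt (y1^2+y2^2) / Real.sqrt D := by
    rw [Real.sqrt_mul (by positivity), Real.sqrt_div (by positivity)]
    ring
  rw [hrhs]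
  have key : |(b*(u*y2 - v*y1) - c*(u*y1 + v*y2))|
      ≤ (|b| + |c|) * (Real.sqrt (u^2+v^2) * Real.sqrt (y1^2+y2^2)) := by
    calc |(b*(u*y2 - v*y1) - c*(u*y1 + v*y2))|
        ≤ |b| * |u*y2 - v*y1| + |c| * |u*y1 + v*y2| := by
          calc _ ≤ |b*(u*y2 - v*y1)| + |c*(u*y1 + v*y2)| := abs_sub _ _
            _ = _ := by rw [abs_mul, abs_mul]
      _ ≤ |b| * (Real.sqrt (u^2+v^2) * Real.sqrt (y1^2+y2^2))
          + |c| * (Real.sqrt (u^2+v^2) * Real.sqrt (y1^2+y2^2)) := by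
          gcongr
          · exact cs_aux u v y1 y2
          · exact cs_aux2 u v y1 y2
      _ = _ := by ring
  have hDs : Real.sqrt D * Real.sqrt D = D := Real.mul_self_sqrt hD.le
  rw [abs_div, abs_of_pos hD]
  rw [div_le_iff₀ hD]
  have : ((|b| + |c|) / Real.sqrt D) * (Real.sqrt (u^2+v^2) * Real.sqrt (y1^2+y2^2) / Real.sqrt D) * D
      = (|b| + |c|) * (Real.sqrt (u^2+v^2) * Real.sqrt (y1^2+y2^2)) := by
    field_simp
    rw [Real.sq_sqrt hD.le]; ring
  rw [this]
  exact key
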